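/- Assume additionally that |∇F(x)| ≤ C_F for all x ∈ ℝ^d. Fix T > 0, τ > 0, a probability measure μ₀ on ℝ^d with finite first moment, and a continuous g : [0,T] → ℝ^d with g(0) = 0. Then there exists a constant C > 0, depending only on L_V, L_F, C_F, T and τ, such that for all t₁, t₂ ∈ [τ, ∞) and all x₁, x₂ ∈ ℝ^d, the solutions f₁, f₂ of f_i(t) = x_i − ∫₀ᵗ ∇V(f_i(s)) ds − ∫₀ᵗ (t_i/(t_i+s))·∇F*μ₀(f_i(s)) ds − ∫₀ᵗ (1/(t_i+s))·∫₀ˢ ∇F(f_i(s)−f_i(u)) du ds + g(t) satisfy sup_{t∈[0,T]} |f₁(t)−f₂(t)| ≤ C·(|x₁−x₂| + |t₁−t₂|). -/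

import Mathlib

open MeasureTheory Set

noncomputable section

abbrev Ed (d : ℕ) : Type := EuclideanSpace ℝ (Fin d)

/-- `f` is a continuous solution on `[0,T]` of the integral equation for the
generalized self-interacting diffusion with initial data `(t₀, μ₀, x₀)` and forcing `g`. -/
def IsSIDSolution {d : ℕ} (V F : Ed d → ℝ) (T t₀ : ℝ) (μ₀ : Measure (Ed d))
    (x₀ : Ed d) (g : ℝ → Ed d) (f : ℝ → Ed d) : Prop :=
  ContinuousOn f (Icc 0 T) ∧
  ∀ t ∈ Icc (0:ℝ) T,
    f t = x₀ - (∫ s in (0:ℝ)..t, gradient V (f s))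
      - (∫ s in (0:ℝ)..t, (t₀ / (t₀ + s)) • (∫ u, gradient F (f s - u) ∂μ₀))
      - (∫ s in (0:ℝ)..t, (1 / (t₀ + s)) • (∫ u in (0:ℝ)..s, gradient F (f s - f u)))
      + g t

lemma continuous_gradient_of_contDiff {d : ℕ} {V : Ed d → ℝ} (hV : ContDiff ℝ 2 V) :
    Continuous (gradient V) := by
  have h := hV.continuous_fderiv (by norm_num)
  exact (InnerProductSpace.toDual ℝ (Ed d)).symm.continuous.comp h

lemma contOn_interaction {d : ℕ} {F : Ed d → ℝ} (contF : Continuous (gradient F))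
    {f : ℝ → Ed d} {T : ℝ} (hT : 0 ≤ T) (hf : ContinuousOn f (Icc 0 T)) :
    ContinuousOn (fun s => ∫ u in (0:ℝ)..s, gradient F (f s - f u)) (Icc 0 T) := by
  set p : ℝ → ℝ := fun s => min (max s 0) T with hp_def
  have hp : Continuous p := (continuous_id.max continuous_const).min continuous_const
  have hpm : ∀ s, p s ∈ Icc (0:ℝ) T :=
    fun s => ⟨le_min (le_max_right s 0) hT, min_le_right _ _⟩
  set f' : ℝ → Ed d := fun s => f (p s) with hf'_def
  have hf' : Continuous f' := hf.comp_continuous hp hpm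
  have hpe : ∀ s ∈ Icc (0:ℝ) T, f' s = f s := by
    intro s hs
    simp only [hf'_def, hp_def, max_eq_left hs.1, min_eq_left hs.2]
  have hcont : Continuous (fun s => ∫ u in (0:ℝ)..s, gradient F (f' s - f' u)) := by
    apply intervalIntegral.continuous_parametric_intervalIntegral_of_continuous
      (f := fun s u => gradient F (f' s - f' u)) ?_ continuous_id
    exact contF.comp ((hf'.comp continuous_fst).sub (hf'.comp continuous_snd))
  apply hcont.continuousOn.congr
  intro s hs
  apply intervalIntegral.integral_congr
  intro u hu
  have hu' : u ∈ Icc (0:ℝ) T := uIcc_subset_Icc ⟨le_refl (0:ℝ), hT⟩ hs hu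
  simp only [hpe s hs, hpe u hu']

set_option maxHeartbeats 1000000 in
/-- Lipschitz dependence of the solution on the starting point `x` and the
past-time `t₀`, uniformly over `t₀ ≥ τ`; the constant `C` depends only on
`L_V, L_F, C_F, T, τ`. -/
theorem stmt3 {d : ℕ} (hd : 1 ≤ d)
    (V F : Ed d → ℝ) (hV : ContDiff ℝ 2 V) (hF : ContDiff ℝ 2 F)
    (LV LF CF : ℝ) (hLV : 0 ≤ LV) (hLF : 0 ≤ LF) (hCF : 0 < CF)
    (hVlip : ∀ x y : Ed d, ‖gradient V x - gradient V y‖ ≤ LV * ‖x - y‖)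
    (hFlip : ∀ x y : Ed d, ‖gradient F x - gradient F y‖ ≤ LF * ‖x - y‖)
    (hFbdd : ∀ x : Ed d, ‖gradient F x‖ ≤ CF)
    (T : ℝ) (hT : 0 < T) (τ : ℝ) (hτ : 0 < τ) :
    ∃ C > (0:ℝ),
      ∀ μ₀ : Measure (Ed d), IsProbabilityMeasure μ₀ →
        Integrable (fun u => ‖u‖) μ₀ →
      ∀ g : ℝ → Ed d, ContinuousOn g (Icc 0 T) → g 0 = 0 →
      ∀ t₁ t₂ : ℝ, τ ≤ t₁ → τ ≤ t₂ →
      ∀ x₁ x₂ : Ed d, ∀ f₁ f₂ : ℝ → Ed d,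
        IsSIDSolution V F T t₁ μ₀ x₁ g f₁ →
        IsSIDSolution V F T t₂ μ₀ x₂ g f₂ →
        ∀ t ∈ Icc (0:ℝ) T, ‖f₁ t - f₂ t‖ ≤ C * (‖x₁ - x₂‖ + |t₁ - t₂|) := by
  have contV : Continuous (gradient V) := continuous_gradient_of_contDiff hV
  have contF : Continuous (gradient F) := continuous_gradient_of_contDiff hF
  have h0T : (0:ℝ) ≤ T := hT.le
  set K : ℝ := LV + LF + 2*LF*T/τ with hKdef
  set M : ℝ := 2*CF*T^2/τ^2 with hMdef
  have hKnn : 0 ≤ K := by positivity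
  have hMpos : 0 < M := by positivity
  refine ⟨(1+M)*Real.exp (K*T), by positivity, ?_⟩
  intro μ₀ hμprob hμint g hg hg0 t₁ t₂ ht₁ ht₂ x₁ x₂ f₁ f₂ hsol₁ hsol₂
  obtain ⟨hf₁c, heq₁⟩ := hsol₁
  obtain ⟨hf₂c, heq₂⟩ := hsol₂
  have ht₁0 : 0 < t₁ := lt_of_lt_of_le hτ ht₁
  have ht₂0 : 0 < t₂ := lt_of_lt_of_le hτ ht₂
  have hden₁ : ∀ s : ℝ, 0 ≤ s → τ ≤ t₁ + s := fun s hs => le_add_of_le_of_nonneg ht₁ hs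
  have hden₂ : ∀ s : ℝ, 0 ≤ s → τ ≤ t₂ + s := fun s hs => le_add_of_le_of_nonneg ht₂ hs
  -- convolution facts
  have hint : ∀ x : Ed d, Integrable (fun u => gradient F (x - u)) μ₀ := by
    intro x
    apply Integrable.mono' (integrable_const CF)
    · exact (contF.comp (continuous_const.sub continuous_id)).aestronglyMeasurable
    · exact Filter.Eventually.of_forall fun u => hFbdd _
  have hΦbdd : ∀ x : Ed d, ‖∫ u, gradient F (x - u) ∂μ₀‖ ≤ CF := by
    intro x
    calc ‖∫ u, gradient F (x - u) ∂μ₀‖ ≤ ∫ u, ‖gradient F (x - u)‖ ∂μ₀ :=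
          norm_integral_le_integral_norm _
      _ ≤ ∫ _u, CF ∂μ₀ := integral_mono (hint x).norm (integrable_const CF) fun u => hFbdd _
      _ = CF := by simp
  have hΦlip : ∀ x y : Ed d,
      ‖(∫ u, gradient F (x - u) ∂μ₀) - (∫ u, gradient F (y - u) ∂μ₀)‖ ≤ LF * ‖x - y‖ := by
    intro x y
    rw [← integral_sub (hint x) (hint y)]
    calc ‖∫ u, (gradient F (x - u) - gradient F (y - u)) ∂μ₀‖
        ≤ ∫ u, ‖gradient F (x - u) - gradient F (y - u)‖ ∂μ₀ := norm_integral_le_integral_norm _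
      _ ≤ ∫ _u, LF * ‖x - y‖ ∂μ₀ := by
          apply integral_mono ((hint x).sub (hint y)).norm (integrable_const _)
          intro u
          have h' : (x - u) - (y - u) = x - y := by abel
          simpa [h'] using hFlip (x - u) (y - u)
      _ = LF * ‖x - y‖ := by simp
  have hΦcont : Continuous (fun x : Ed d => ∫ u, gradient F (x - u) ∂μ₀) := by
    have : LipschitzWith ⟨LF, hLF⟩ (fun x : Ed d => ∫ u, gradient F (x - u) ∂μ₀) := by
      apply LipschitzWith.of_dist_le_mul
      intro x y
      rw [dist_eq_norm, dist_eq_norm]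
      exact hΦlip x y
    exact this.continuous
  -- h and φ
  set h : ℝ → ℝ := fun s => ‖f₁ s - f₂ s‖ with hhdef
  have hHc : ContinuousOn h (Icc 0 T) := (hf₁c.sub hf₂c).norm
  have hHnn : ∀ s, 0 ≤ h s := fun s => norm_nonneg _
  have hHint : ∀ a b : ℝ, a ∈ Icc (0:ℝ) T → b ∈ Icc (0:ℝ) T →
      IntervalIntegrable h volume a b := fun a b ha hb =>
    (hHc.mono (uIcc_subset_Icc ha hb)).intervalIntegrable
  set φ : ℝ → ℝ := fun r => ∫ s in (0:ℝ)..r, h s with hφdef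
  have hφc : ContinuousOn φ (Icc 0 T) := by
    have := intervalIntegral.continuousOn_primitive_interval (μ := volume) (a := (0:ℝ)) (b := T)
      (f := h) ?_
    · rwa [uIcc_of_le h0T] at this
    · rw [uIcc_of_le h0T]; exact hHc.integrableOn_Icc
  have hφnn : ∀ r ∈ Icc (0:ℝ) T, 0 ≤ φ r := fun r hr =>
    intervalIntegral.integral_nonneg hr.1 fun u _ => hHnn u
  have hφle : ∀ s t : ℝ, 0 ≤ s → s ≤ t → t ≤ T → (∫ u in (0:ℝ)..s, h u) ≤ φ t := by
    intro s t h0s hst htT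
    have hs : s ∈ Icc (0:ℝ) T := ⟨h0s, hst.trans htT⟩
    have ht : t ∈ Icc (0:ℝ) T := ⟨h0s.trans hst, htT⟩
    have h1 : IntervalIntegrable h volume 0 s := hHint 0 s ⟨le_rfl, h0T⟩ hs
    have h2 : IntervalIntegrable h volume s t := hHint s t hs ht
    have h3 := intervalIntegral.integral_add_adjacent_intervals h1 h2
    have h4 : 0 ≤ ∫ u in s..t, h u :=
      intervalIntegral.integral_nonneg hst fun u _ => hHnn u
    simp only [hφdef]
    linarith
  -- continuity of the six integrands
  have cdiv₁ : ContinuousOn (fun s : ℝ => t₁ / (t₁ + s)) (Icc 0 T) := by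
    apply continuousOn_const.div ((continuous_const.add continuous_id).continuousOn)
    intro s hs; exact ne_of_gt (lt_of_lt_of_le hτ (hden₁ s hs.1))
  have cdiv₂ : ContinuousOn (fun s : ℝ => t₂ / (t₂ + s)) (Icc 0 T) := by
    apply continuousOn_const.div ((continuous_const.add continuous_id).continuousOn)
    intro s hs; exact ne_of_gt (lt_of_lt_of_le hτ (hden₂ s hs.1))
  have cdiv₁' : ContinuousOn (fun s : ℝ => 1 / (t₁ + s)) (Icc 0 T) := by
    apply continuousOn_const.div ((continuous_const.add continuous_id).continuousOn)
    intro s hs; exact ne_of_gt (lt_of_lt_of_le hτ (hden₁ s hs.1))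
  have cdiv₂' : ContinuousOn (fun s : ℝ => 1 / (t₂ + s)) (Icc 0 T) := by
    apply continuousOn_const.div ((continuous_const.add continuous_id).continuousOn)
    intro s hs; exact ne_of_gt (lt_of_lt_of_le hτ (hden₂ s hs.1))
  have cA₁ : ContinuousOn (fun s => gradient V (f₁ s)) (Icc 0 T) :=
    contV.comp_continuousOn hf₁c
  have cA₂ : ContinuousOn (fun s => gradient V (f₂ s)) (Icc 0 T) :=
    contV.comp_continuousOn hf₂c
  have cB₁ : ContinuousOn
      (fun s => (t₁ / (t₁ + s)) • (∫ u, gradient F (f₁ s - u) ∂μ₀)) (Icc 0 T) :=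
    cdiv₁.smul (hΦcont.comp_continuousOn hf₁c)
  have cB₂ : ContinuousOn
      (fun s => (t₂ / (t₂ + s)) • (∫ u, gradient F (f₂ s - u) ∂μ₀)) (Icc 0 T) :=
    cdiv₂.smul (hΦcont.comp_continuousOn hf₂c)
  have cC₁ : ContinuousOn
      (fun s => (1 / (t₁ + s)) • (∫ u in (0:ℝ)..s, gradient F (f₁ s - f₁ u))) (Icc 0 T) :=
    cdiv₁'.smul (contOn_interaction contF h0T hf₁c)
  have cC₂ : ContinuousOn
      (fun s => (1 / (t₂ + s)) • (∫ u in (0:ℝ)..s, gradient F (f₂ s - f₂ u))) (Icc 0 T) :=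
    cdiv₂'.smul (contOn_interaction contF h0T hf₂c)
  -- the key integral inequality
  have key : ∀ t ∈ Icc (0:ℝ) T, h t ≤ (‖x₁ - x₂‖ + M * |t₁ - t₂|) + K * φ t := by
    intro t ht
    have h0t : 0 ≤ t := ht.1
    have htT : t ≤ T := ht.2
    have hsub : uIcc 0 t ⊆ Icc 0 T := uIcc_subset_Icc ⟨le_refl (0:ℝ), h0T⟩ ht
    have iA₁ : IntervalIntegrable (fun s => gradient V (f₁ s)) volume 0 t :=
      (cA₁.mono hsub).intervalIntegrable
    have iA₂ : IntervalIntegrable (fun s => gradient V (f₂ s)) volume 0 t :=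
      (cA₂.mono hsub).intervalIntegrable
    have iB₁ : IntervalIntegrable
        (fun s => (t₁ / (t₁ + s)) • (∫ u, gradient F (f₁ s - u) ∂μ₀)) volume 0 t :=
      (cB₁.mono hsub).intervalIntegrable
    have iB₂ : IntervalIntegrable
        (fun s => (t₂ / (t₂ + s)) • (∫ u, gradient F (f₂ s - u) ∂μ₀)) volume 0 t :=
      (cB₂.mono hsub).intervalIntegrable
    have iC₁ : IntervalIntegrable
        (fun s => (1 / (t₁ + s)) • (∫ u in (0:ℝ)..s, gradient F (f₁ s - f₁ u))) volume 0 t :=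
      (cC₁.mono hsub).intervalIntegrable
    have iC₂ : IntervalIntegrable
        (fun s => (1 / (t₂ + s)) • (∫ u in (0:ℝ)..s, gradient F (f₂ s - f₂ u))) volume 0 t :=
      (cC₂.mono hsub).intervalIntegrable
    have heqd : f₁ t - f₂ t = (x₁ - x₂)
        - (∫ s in (0:ℝ)..t, (gradient V (f₁ s) - gradient V (f₂ s)))
        - (∫ s in (0:ℝ)..t, ((t₁/(t₁+s)) • (∫ u, gradient F (f₁ s - u) ∂μ₀)
              - (t₂/(t₂+s)) • (∫ u, gradient F (f₂ s - u) ∂μ₀)))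
        - (∫ s in (0:ℝ)..t, ((1/(t₁+s)) • (∫ u in (0:ℝ)..s, gradient F (f₁ s - f₁ u))
              - (1/(t₂+s)) • (∫ u in (0:ℝ)..s, gradient F (f₂ s - f₂ u)))) := by
      rw [intervalIntegral.integral_sub iA₁ iA₂, intervalIntegral.integral_sub iB₁ iB₂,
        intervalIntegral.integral_sub iC₁ iC₂, heq₁ t ht, heq₂ t ht]
      abel
    set cb : ℝ := CF*T/τ^2*|t₁-t₂| with hcb
    have hcbnn : 0 ≤ cb := by positivity
    -- pointwise bound for the measure-interaction term
    have hbB : ∀ s ∈ Icc (0:ℝ) T,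
        ‖(t₁/(t₁+s)) • (∫ u, gradient F (f₁ s - u) ∂μ₀)
          - (t₂/(t₂+s)) • (∫ u, gradient F (f₂ s - u) ∂μ₀)‖ ≤ LF * h s + cb := by
      intro s hs
      have hs0 := hs.1
      have d₁ : (0:ℝ) < t₁ + s := lt_of_lt_of_le hτ (hden₁ s hs0)
      have d₂ : (0:ℝ) < t₂ + s := lt_of_lt_of_le hτ (hden₂ s hs0)
      set P₁ := ∫ u, gradient F (f₁ s - u) ∂μ₀ with hP₁
      set P₂ := ∫ u, gradient F (f₂ s - u) ∂μ₀ with hP₂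
      have e1 : (t₁/(t₁+s)) • P₁ - (t₂/(t₂+s)) • P₂
          = (t₁/(t₁+s)) • (P₁ - P₂) + ((t₁/(t₁+s)) - (t₂/(t₂+s))) • P₂ := by
        rw [smul_sub, sub_smul]; abel
      rw [e1]
      have hr1 : |t₁/(t₁+s)| ≤ 1 := by
        rw [abs_of_nonneg (by positivity)]
        apply div_le_one_of_le₀ (by linarith) d₁.le
      have hr2 : |t₁/(t₁+s) - t₂/(t₂+s)| ≤ T/τ^2 * |t₁ - t₂| := by
        have e2 : t₁/(t₁+s) - t₂/(t₂+s) = s*(t₁-t₂)/((t₁+s)*(t₂+s)) := by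
          first
          | (field_simp; ring)
          | field_simp
        rw [e2, abs_div, abs_mul, abs_of_nonneg hs0,
          abs_of_nonneg (by positivity : (0:ℝ) ≤ (t₁+s)*(t₂+s))]
        have hτ2 : τ^2 ≤ (t₁+s)*(t₂+s) := by
          have h1 := hden₁ s hs0; have h2 := hden₂ s hs0; nlinarith
        calc s*|t₁-t₂| / ((t₁+s)*(t₂+s)) ≤ T*|t₁-t₂| / τ^2 := by
              apply div_le_div₀ (by positivity) ?_ (by positivity) hτ2
              exact mul_le_mul_of_nonneg_right hs.2 (abs_nonneg _)
          _ = T/τ^2*|t₁-t₂| := by ring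
      calc ‖(t₁/(t₁+s)) • (P₁ - P₂) + ((t₁/(t₁+s)) - (t₂/(t₂+s))) • P₂‖
          ≤ ‖(t₁/(t₁+s)) • (P₁ - P₂)‖ + ‖((t₁/(t₁+s)) - (t₂/(t₂+s))) • P₂‖ := norm_add_le _ _
        _ = |t₁/(t₁+s)| * ‖P₁ - P₂‖ + |t₁/(t₁+s) - t₂/(t₂+s)| * ‖P₂‖ := by
            rw [norm_smul, norm_smul, Real.norm_eq_abs, Real.norm_eq_abs]
        _ ≤ 1 * (LF * h s) + (T/τ^2*|t₁-t₂|) * CF := by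
            apply add_le_add
            · exact mul_le_mul hr1 (hΦlip (f₁ s) (f₂ s)) (norm_nonneg _) zero_le_one
            · exact mul_le_mul hr2 (hΦbdd _) (norm_nonneg _) (by positivity)
        _ = LF * h s + cb := by rw [hcb]; ring
    -- pointwise bound for the self-interaction term
    have hbC : ∀ s ∈ Icc (0:ℝ) t,
        ‖(1/(t₁+s)) • (∫ u in (0:ℝ)..s, gradient F (f₁ s - f₁ u))
          - (1/(t₂+s)) • (∫ u in (0:ℝ)..s, gradient F (f₂ s - f₂ u))‖
          ≤ (LF*T/τ) * h s + ((LF/τ) * φ t + cb) := by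
      intro s hs
      have hs0 : (0:ℝ) ≤ s := hs.1
      have hsT : s ≤ T := hs.2.trans htT
      have hsIcc : s ∈ Icc (0:ℝ) T := ⟨hs0, hsT⟩
      have d₁ : (0:ℝ) < t₁ + s := lt_of_lt_of_le hτ (hden₁ s hs0)
      have d₂ : (0:ℝ) < t₂ + s := lt_of_lt_of_le hτ (hden₂ s hs0)
      have hsubs : uIcc 0 s ⊆ Icc (0:ℝ) T := uIcc_subset_Icc ⟨le_refl (0:ℝ), h0T⟩ hsIcc
      have iG₁ : IntervalIntegrable (fun u => gradient F (f₁ s - f₁ u)) volume 0 s :=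
        ((contF.comp_continuousOn (continuousOn_const.sub hf₁c)).mono hsubs).intervalIntegrable
      have iG₂ : IntervalIntegrable (fun u => gradient F (f₂ s - f₂ u)) volume 0 s :=
        ((contF.comp_continuousOn (continuousOn_const.sub hf₂c)).mono hsubs).intervalIntegrable
      set B₁ := ∫ u in (0:ℝ)..s, gradient F (f₁ s - f₁ u) with hB₁
      set B₂ := ∫ u in (0:ℝ)..s, gradient F (f₂ s - f₂ u) with hB₂
      have hB₂b : ‖B₂‖ ≤ CF * T := by
        calc ‖B₂‖ ≤ CF * |s - 0| :=
              intervalIntegral.norm_integral_le_of_norm_le_const fun u _ => hFbdd _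
          _ = CF * s := by rw [sub_zero, abs_of_nonneg hs0]
          _ ≤ CF * T := by nlinarith
      have hBd : ‖B₁ - B₂‖ ≤ LF*T * h s + LF * φ t := by
        rw [hB₁, hB₂, ← intervalIntegral.integral_sub iG₁ iG₂]
        have hbnd : ‖∫ u in (0:ℝ)..s, (gradient F (f₁ s - f₁ u) - gradient F (f₂ s - f₂ u))‖
            ≤ |∫ u in (0:ℝ)..s, (LF * h s + LF * h u)| := by
          apply intervalIntegral.norm_integral_le_abs_of_norm_le
          · apply Filter.Eventually.of_forall
            intro u
            calc ‖gradient F (f₁ s - f₁ u) - gradient F (f₂ s - f₂ u)‖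
                ≤ LF * ‖(f₁ s - f₁ u) - (f₂ s - f₂ u)‖ := hFlip _ _
              _ ≤ LF * (h s + h u) := by
                  apply mul_le_mul_of_nonneg_left ?_ hLF
                  have e : (f₁ s - f₁ u) - (f₂ s - f₂ u) = (f₁ s - f₂ s) - (f₁ u - f₂ u) := by
                    abel
                  rw [e]; exact norm_sub_le _ _
              _ = LF * h s + LF * h u := by ring
          · apply IntervalIntegrable.add intervalIntegrable_const
            exact (hHint 0 s ⟨le_refl (0:ℝ), h0T⟩ hsIcc).const_mul LF
        have hval : (∫ u in (0:ℝ)..s, (LF * h s + LF * h u))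
            = LF * h s * s + LF * ∫ u in (0:ℝ)..s, h u := by
          rw [intervalIntegral.integral_add intervalIntegrable_const
            ((hHint 0 s ⟨le_refl (0:ℝ), h0T⟩ hsIcc).const_mul LF),
            intervalIntegral.integral_const, intervalIntegral.integral_const_mul]
          simp [smul_eq_mul]; ring
        have hφts : (∫ u in (0:ℝ)..s, h u) ≤ φ t := hφle s t hs0 hs.2 htT
        have hnn : 0 ≤ LF * h s * s + LF * ∫ u in (0:ℝ)..s, h u := by
          have : 0 ≤ ∫ u in (0:ℝ)..s, h u :=
            intervalIntegral.integral_nonneg hs0 fun u _ => hHnn u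
          positivity
        calc ‖∫ u in (0:ℝ)..s, (gradient F (f₁ s - f₁ u) - gradient F (f₂ s - f₂ u))‖
            ≤ |∫ u in (0:ℝ)..s, (LF * h s + LF * h u)| := hbnd
          _ = LF * h s * s + LF * ∫ u in (0:ℝ)..s, h u := by
              rw [hval]; exact abs_of_nonneg hnn
          _ ≤ LF*T * h s + LF * φ t := by
              have h1 : LF * h s * s ≤ LF*T*h s := by
                nlinarith [mul_le_mul_of_nonneg_left hsT (mul_nonneg hLF (hHnn s))]
              have h2 : LF * ∫ u in (0:ℝ)..s, h u ≤ LF * φ t :=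
                mul_le_mul_of_nonneg_left hφts hLF
              linarith
      have e1 : (1/(t₁+s)) • B₁ - (1/(t₂+s)) • B₂
          = (1/(t₁+s)) • (B₁ - B₂) + ((1/(t₁+s)) - (1/(t₂+s))) • B₂ := by
        rw [smul_sub, sub_smul]; abel
      have hr1 : |1/(t₁+s)| ≤ 1/τ := by
        rw [abs_of_nonneg (by positivity)]
        apply one_div_le_one_div_of_le hτ (hden₁ s hs0)
      have hr2 : |1/(t₁+s) - 1/(t₂+s)| ≤ |t₁-t₂|/τ^2 := by
        have e2 : 1/(t₁+s) - 1/(t₂+s) = (t₂-t₁)/((t₁+s)*(t₂+s)) := by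
          first
          | (field_simp; ring)
          | field_simp
        rw [e2, abs_div, abs_of_nonneg (by positivity : (0:ℝ) ≤ (t₁+s)*(t₂+s))]
        have hτ2 : τ^2 ≤ (t₁+s)*(t₂+s) := by
          have h1 := hden₁ s hs0; have h2 := hden₂ s hs0; nlinarith
        have e3 : |t₂ - t₁| = |t₁ - t₂| := abs_sub_comm _ _
        rw [e3]
        exact div_le_div₀ (abs_nonneg _) le_rfl (by positivity) hτ2
      rw [e1]
      calc ‖(1/(t₁+s)) • (B₁ - B₂) + ((1/(t₁+s)) - (1/(t₂+s))) • B₂‖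
          ≤ ‖(1/(t₁+s)) • (B₁ - B₂)‖ + ‖((1/(t₁+s)) - (1/(t₂+s))) • B₂‖ := norm_add_le _ _
        _ = |1/(t₁+s)| * ‖B₁ - B₂‖ + |1/(t₁+s) - 1/(t₂+s)| * ‖B₂‖ := by
            rw [norm_smul, norm_smul, Real.norm_eq_abs, Real.norm_eq_abs]
        _ ≤ (1/τ) * (LF*T * h s + LF * φ t) + (|t₁-t₂|/τ^2) * (CF * T) := by
            apply add_le_add
            · apply mul_le_mul hr1 hBd (norm_nonneg _) (by positivity)
            · apply mul_le_mul hr2 hB₂b (norm_nonneg _) (by positivity)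
        _ = (LF*T/τ) * h s + ((LF/τ) * φ t + cb) := by rw [hcb]; ring
    -- integrate the bounds
    have hφt0 : 0 ≤ φ t := hφnn t ht
    have hih : IntervalIntegrable h volume 0 t := hHint 0 t ⟨le_refl (0:ℝ), h0T⟩ ht
    have bA : ‖∫ s in (0:ℝ)..t, (gradient V (f₁ s) - gradient V (f₂ s))‖ ≤ LV * φ t := by
      have hb := intervalIntegral.norm_integral_le_abs_of_norm_le
        (f := fun s => gradient V (f₁ s) - gradient V (f₂ s)) (g := fun s => LV * h s)
        (Filter.Eventually.of_forall fun s => hVlip (f₁ s) (f₂ s)) (hih.const_mul LV)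
      rw [intervalIntegral.integral_const_mul,
        abs_of_nonneg (mul_nonneg hLV hφt0)] at hb
      exact hb
    have bB : ‖∫ s in (0:ℝ)..t, ((t₁/(t₁+s)) • (∫ u, gradient F (f₁ s - u) ∂μ₀)
          - (t₂/(t₂+s)) • (∫ u, gradient F (f₂ s - u) ∂μ₀))‖ ≤ LF * φ t + cb * t := by
      have hae : ∀ᵐ s ∂(volume.restrict (Set.uIoc (0:ℝ) t)),
          ‖(t₁/(t₁+s)) • (∫ u, gradient F (f₁ s - u) ∂μ₀)
            - (t₂/(t₂+s)) • (∫ u, gradient F (f₂ s - u) ∂μ₀)‖ ≤ LF * h s + cb := by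
        rw [uIoc_of_le h0t]
        exact (ae_restrict_mem measurableSet_Ioc).mono
          fun s hs => hbB s ⟨hs.1.le, hs.2.trans htT⟩
      have hb := intervalIntegral.norm_integral_le_abs_of_norm_le hae
        ((hih.const_mul LF).add intervalIntegrable_const)
      rw [intervalIntegral.integral_add (hih.const_mul LF) intervalIntegrable_const,
        intervalIntegral.integral_const_mul, intervalIntegral.integral_const,
        smul_eq_mul, sub_zero] at hb
      have hnn : 0 ≤ LF * φ t + t * cb :=
        add_nonneg (mul_nonneg hLF hφt0) (mul_nonneg h0t hcbnn)
      rw [abs_of_nonneg hnn] at hb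
      linarith
    have bC : ‖∫ s in (0:ℝ)..t, ((1/(t₁+s)) • (∫ u in (0:ℝ)..s, gradient F (f₁ s - f₁ u))
          - (1/(t₂+s)) • (∫ u in (0:ℝ)..s, gradient F (f₂ s - f₂ u)))‖
          ≤ (LF*T/τ) * φ t + ((LF/τ) * φ t + cb) * t := by
      have hae : ∀ᵐ s ∂(volume.restrict (Set.uIoc (0:ℝ) t)),
          ‖(1/(t₁+s)) • (∫ u in (0:ℝ)..s, gradient F (f₁ s - f₁ u))
            - (1/(t₂+s)) • (∫ u in (0:ℝ)..s, gradient F (f₂ s - f₂ u))‖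
            ≤ (LF*T/τ) * h s + ((LF/τ) * φ t + cb) := by
        rw [uIoc_of_le h0t]
        exact (ae_restrict_mem measurableSet_Ioc).mono
          fun s hs => hbC s ⟨hs.1.le, hs.2⟩
      have hb := intervalIntegral.norm_integral_le_abs_of_norm_le hae
        ((hih.const_mul (LF*T/τ)).add intervalIntegrable_const)
      rw [intervalIntegral.integral_add (hih.const_mul (LF*T/τ)) intervalIntegrable_const,
        intervalIntegral.integral_const_mul, intervalIntegral.integral_const,
        smul_eq_mul, sub_zero] at hb
      have hnn : 0 ≤ (LF*T/τ) * φ t + t * ((LF/τ) * φ t + cb) := by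
        apply add_nonneg (mul_nonneg (by positivity) hφt0)
        exact mul_nonneg h0t (add_nonneg (mul_nonneg (by positivity) hφt0) hcbnn)
      rw [abs_of_nonneg hnn] at hb
      linarith
    have hnorm : h t ≤ ‖x₁ - x₂‖ + LV * φ t + (LF * φ t + cb * t)
        + ((LF*T/τ) * φ t + ((LF/τ) * φ t + cb) * t) := by
      show ‖f₁ t - f₂ t‖ ≤ _
      rw [heqd]
      have n1 := norm_sub_le ((x₁ - x₂)
        - (∫ s in (0:ℝ)..t, (gradient V (f₁ s) - gradient V (f₂ s)))
        - (∫ s in (0:ℝ)..t, ((t₁/(t₁+s)) • (∫ u, gradient F (f₁ s - u) ∂μ₀)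
              - (t₂/(t₂+s)) • (∫ u, gradient F (f₂ s - u) ∂μ₀))))
        (∫ s in (0:ℝ)..t, ((1/(t₁+s)) • (∫ u in (0:ℝ)..s, gradient F (f₁ s - f₁ u))
              - (1/(t₂+s)) • (∫ u in (0:ℝ)..s, gradient F (f₂ s - f₂ u))))
      have n2 := norm_sub_le ((x₁ - x₂)
        - (∫ s in (0:ℝ)..t, (gradient V (f₁ s) - gradient V (f₂ s))))
        (∫ s in (0:ℝ)..t, ((t₁/(t₁+s)) • (∫ u, gradient F (f₁ s - u) ∂μ₀)
              - (t₂/(t₂+s)) • (∫ u, gradient F (f₂ s - u) ∂μ₀)))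
      have n3 := norm_sub_le (x₁ - x₂)
        (∫ s in (0:ℝ)..t, (gradient V (f₁ s) - gradient V (f₂ s)))
      linarith
    have h1 : cb * t ≤ cb * T := mul_le_mul_of_nonneg_left htT hcbnn
    have h2 : ((LF/τ) * φ t + cb) * t ≤ (LF*T/τ) * φ t + cb * T := by
      have hD : 0 ≤ (LF/τ) * φ t + cb :=
        add_nonneg (mul_nonneg (by positivity) hφt0) hcbnn
      calc ((LF/τ) * φ t + cb) * t ≤ ((LF/τ) * φ t + cb) * T :=
            mul_le_mul_of_nonneg_left htT hD
        _ = (LF*T/τ) * φ t + cb * T := by ring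
    have hMcb : M * |t₁ - t₂| = 2 * (cb * T) := by rw [hMdef, hcb]; ring
    have hKφ : K * φ t = LV * φ t + LF * φ t + 2*((LF*T/τ) * φ t) := by
      rw [hKdef]; ring
    rw [hMcb, hKφ]
    linarith


  -- Gronwall
  set ε : ℝ := ‖x₁ - x₂‖ + M * |t₁ - t₂| with hεdef
  have hεnn : 0 ≤ ε := add_nonneg (norm_nonneg _) (mul_nonneg hMpos.le (abs_nonneg _))
  have hderiv : ∀ x ∈ Ico (0:ℝ) T, HasDerivWithinAt φ (h x) (Ici x) x := by
    intro x hx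
    have hxI : x ∈ Icc (0:ℝ) T := ⟨hx.1, hx.2.le⟩
    have hmem : Icc (0:ℝ) T ∈ nhdsWithin x (Ioi x) :=
      mem_nhdsWithin.mpr ⟨Iio T, isOpen_Iio, hx.2,
        fun y hy => ⟨hx.1.trans hy.2.le, hy.1.le⟩⟩
    have hmeas : StronglyMeasurableAtFilter h (nhdsWithin x (Ioi x)) volume :=
      ⟨Icc 0 T, hmem, hHc.aestronglyMeasurable measurableSet_Icc⟩
    have hcw : ContinuousWithinAt h (Ici x) x := by
      rw [← continuousWithinAt_Icc_iff_Ici hx.2]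
      exact (hHc x hxI).mono (Icc_subset_Icc hx.1 le_rfl)
    exact intervalIntegral.integral_hasDerivWithinAt_right (t := Ioi x)
      (hHint 0 x ⟨le_refl (0:ℝ), h0T⟩ hxI) hmeas (hcw.mono Ioi_subset_Ici_self)
  have hbound : ∀ x ∈ Ico (0:ℝ) T, ‖h x‖ ≤ K * ‖φ x‖ + ε := by
    intro x hx
    have hxI : x ∈ Icc (0:ℝ) T := ⟨hx.1, hx.2.le⟩
    rw [Real.norm_eq_abs, Real.norm_eq_abs, abs_of_nonneg (hHnn x),
      abs_of_nonneg (hφnn x hxI)]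
    have hk := key x hxI
    linarith
  have hφ0 : ‖φ (0:ℝ)‖ ≤ 0 := by
    simp only [hφdef]
    rw [intervalIntegral.integral_same]
    simp
  have grw := norm_le_gronwallBound_of_norm_deriv_right_le hφc hderiv hφ0 hbound
  intro t ht
  have hφb : φ t ≤ gronwallBound 0 K ε t := by
    have hg := grw t ht
    rw [sub_zero, Real.norm_eq_abs, abs_of_nonneg (hφnn t ht)] at hg
    exact hg
  have hkey := key t ht
  have hfin : ε + K * gronwallBound 0 K ε t ≤ ε * Real.exp (K*T) := by
    rcases eq_or_lt_of_le hKnn with hK0 | hKpos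
    · rw [← hK0, gronwallBound_K0]
      simp only [zero_mul, zero_add, Real.exp_zero, mul_one, add_zero]
      linarith
    · have hKne : K ≠ 0 := ne_of_gt hKpos
      simp only [gronwallBound_of_K_ne_0 hKne]
      have e1 : ε + K*((0:ℝ)*Real.exp (K*t) + ε/K*(Real.exp (K*t)-1)) = ε*Real.exp (K*t) := by
        field_simp
        ring
      rw [e1]
      have e2 : Real.exp (K*t) ≤ Real.exp (K*T) :=
        Real.exp_le_exp.mpr (mul_le_mul_of_nonneg_left ht.2 hKnn)
      nlinarith
  have hmain : h t ≤ ε * Real.exp (K*T) := by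
    have h2 : K * φ t ≤ K * gronwallBound 0 K ε t := mul_le_mul_of_nonneg_left hφb hKnn
    linarith
  have hexp : (0:ℝ) < Real.exp (K*T) := Real.exp_pos _
  calc ‖f₁ t - f₂ t‖ = h t := rfl
    _ ≤ ε * Real.exp (K*T) := hmain
    _ ≤ ((1+M) * Real.exp (K*T)) * (‖x₁ - x₂‖ + |t₁ - t₂|) := by
        rw [hεdef]
        nlinarith [mul_nonneg (abs_nonneg (t₁-t₂)) hexp.le,
          mul_nonneg (mul_nonneg hMpos.le (norm_nonneg (x₁-x₂))) hexp.le,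
          norm_nonneg (x₁-x₂), abs_nonneg (t₁-t₂)]
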